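/- arXiv:2005.07736 — 7 statements merged into one kernel-verified Lean document; each statement's English description precedes it below -/
import Mathlib

section
/- Let d = k = 5. The orbit of the row vector δ₄ = (0,0,0,1) ∈ (ℤ/2ℤ)⁴ under right multiplication by the subgroup H₂(5,5) of GL(4, ℤ/2ℤ) generated by the reductions modulo 2 of M₀(5,5) and M₁ is exactly the set {(0,0,0,1), (0,0,1,0), (0,1,1,0), (0,1,1,1), (1,0,0,0), (1,0,1,0), (1,1,0,0), (1,1,0,1), (1,1,1,0), (1,1,1,1)}. -/
/-- The monodromy matrix `M₀(d,k)` around `0` of the Picard–Fuchs equation of certain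
mirror Calabi–Yau threefolds. -/
def M0 (d k : ℤ) : Matrix (Fin 4) (Fin 4) ℤ :=
  !![1, 1, 0, 0; 0, 1, 0, 0; d, d, 1, 0; 0, -k, -1, 1]

/-- The monodromy matrix `M₁` around `1`. -/
def M1 : Matrix (Fin 4) (Fin 4) ℤ :=
  !![1, 0, 0, 0; 0, 1, 0, 1; 0, 0, 1, 0; 0, 0, 0, 1]

lemma M0_det (d k : ℤ) : (M0 d k).det = 1 := by
  simp [M0, Matrix.det_succ_row_zero, Fin.sum_univ_succ, Fin.succAbove]

lemma M1_det : M1.det = 1 := by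
  simp [M1, Matrix.det_succ_row_zero, Fin.sum_univ_succ, Fin.succAbove]

/-- The reduction modulo `p` of `M₀(d,k)`, as an element of `GL (Fin 4) (ZMod p)`. -/
noncomputable def M0p (p : ℕ) (d k : ℤ) : GL (Fin 4) (ZMod p) :=
  Matrix.nonsingInvUnit ((M0 d k).map (Int.castRingHom (ZMod p)))
    (by rw [← RingHom.mapMatrix_apply, ← RingHom.map_det, M0_det]; simp)

/-- The reduction modulo `p` of `M₁`, as an element of `GL (Fin 4) (ZMod p)`. -/
noncomputable def M1p (p : ℕ) : GL (Fin 4) (ZMod p) :=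
  Matrix.nonsingInvUnit (M1.map (Int.castRingHom (ZMod p)))
    (by rw [← RingHom.mapMatrix_apply, ← RingHom.map_det, M1_det]; simp)

section Aux

open Matrix

def A2 : Matrix (Fin 4) (Fin 4) (ZMod 2) := !![1,1,0,0;0,1,0,0;1,1,1,0;0,1,1,1]
def B2 : Matrix (Fin 4) (Fin 4) (ZMod 2) := !![1,0,0,0;0,1,0,1;0,0,1,0;0,0,0,1]
def A2i : Matrix (Fin 4) (Fin 4) (ZMod 2) := !![1,1,0,0;0,1,0,0;1,0,1,0;1,1,1,1]

lemma coe_M0p : ((M0p 2 5 5 : GL (Fin 4) (ZMod 2)) : Matrix (Fin 4) (Fin 4) (ZMod 2)) = A2 := by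
  show (M0 5 5).map (Int.castRingHom (ZMod 2)) = A2
  ext i j
  fin_cases i <;> fin_cases j <;> simp [M0, A2] <;> decide

lemma coe_M1p : ((M1p 2 : GL (Fin 4) (ZMod 2)) : Matrix (Fin 4) (Fin 4) (ZMod 2)) = B2 := by
  show M1.map (Int.castRingHom (ZMod 2)) = B2
  ext i j
  fin_cases i <;> fin_cases j <;> simp [M1, B2] <;> decide

lemma A2_mul_A2i : A2 * A2i = 1 := by decide
lemma B2_mul_B2 : B2 * B2 = 1 := by decide

lemma coe_M0p_inv :
    (((M0p 2 5 5)⁻¹ : GL (Fin 4) (ZMod 2)) : Matrix (Fin 4) (Fin 4) (ZMod 2)) = A2i := by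
  have h : ((M0p 2 5 5 : GL (Fin 4) (ZMod 2)) : Matrix (Fin 4) (Fin 4) (ZMod 2)) *
      (((M0p 2 5 5)⁻¹ : GL (Fin 4) (ZMod 2)) : Matrix (Fin 4) (Fin 4) (ZMod 2)) = 1 := by
    rw [← Units.val_mul, mul_inv_cancel]; rfl
  rw [coe_M0p] at h
  have h2 := A2_mul_A2i
  -- A2 is invertible with left inverse, so cancel
  have : A2i = A2i := rfl
  calc (((M0p 2 5 5)⁻¹ : GL (Fin 4) (ZMod 2)) : Matrix (Fin 4) (Fin 4) (ZMod 2))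
      = 1 * (((M0p 2 5 5)⁻¹ : GL (Fin 4) (ZMod 2)) : Matrix _ _ _) := by rw [one_mul]
    _ = (A2i * A2) * (((M0p 2 5 5)⁻¹ : GL (Fin 4) (ZMod 2)) : Matrix _ _ _) := by
        have : A2i * A2 = 1 := by decide
        rw [this]
    _ = A2i * (A2 * (((M0p 2 5 5)⁻¹ : GL (Fin 4) (ZMod 2)) : Matrix _ _ _)) := by rw [mul_assoc]
    _ = A2i := by rw [h, mul_one]

lemma coe_M1p_inv :
    (((M1p 2)⁻¹ : GL (Fin 4) (ZMod 2)) : Matrix (Fin 4) (Fin 4) (ZMod 2)) = B2 := by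
  have h : ((M1p 2 : GL (Fin 4) (ZMod 2)) : Matrix (Fin 4) (Fin 4) (ZMod 2)) *
      (((M1p 2)⁻¹ : GL (Fin 4) (ZMod 2)) : Matrix (Fin 4) (Fin 4) (ZMod 2)) = 1 := by
    rw [← Units.val_mul, mul_inv_cancel]; rfl
  rw [coe_M1p] at h
  calc (((M1p 2)⁻¹ : GL (Fin 4) (ZMod 2)) : Matrix (Fin 4) (Fin 4) (ZMod 2))
      = (B2 * B2) * (((M1p 2)⁻¹ : GL (Fin 4) (ZMod 2)) : Matrix _ _ _) := by
        rw [B2_mul_B2, one_mul]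
    _ = B2 * (B2 * (((M1p 2)⁻¹ : GL (Fin 4) (ZMod 2)) : Matrix _ _ _)) := by rw [mul_assoc]
    _ = B2 := by rw [h, mul_one]

def good (w : Fin 4 → ZMod 2) : Prop :=
  w = ![0,0,0,1] ∨ w = ![0,0,1,0] ∨ w = ![0,1,1,0] ∨ w = ![0,1,1,1] ∨ w = ![1,0,0,0] ∨
  w = ![1,0,1,0] ∨ w = ![1,1,0,0] ∨ w = ![1,1,0,1] ∨ w = ![1,1,1,0] ∨ w = ![1,1,1,1]

instance : DecidablePred good := fun w => by unfold good; infer_instance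

lemma good_A2 : ∀ w, good w → good (Matrix.vecMul w A2) := by decide
lemma good_B2 : ∀ w, good w → good (Matrix.vecMul w B2) := by decide
lemma good_A2i : ∀ w, good w → good (Matrix.vecMul w A2i) := by decide

end Aux

theorem orbit2_delta4_55 :
    {w : Fin 4 → ZMod 2 |
      ∃ g ∈ Subgroup.closure {M0p 2 5 5, M1p 2},
        w = Matrix.vecMul ![0,0,0,1] (g : Matrix (Fin 4) (Fin 4) (ZMod 2))} =
    {![0,0,0,1], ![0,0,1,0], ![0,1,1,0], ![0,1,1,1], ![1,0,0,0], ![1,0,1,0], ![1,1,0,0], ![1,1,0,1], ![1,1,1,0], ![1,1,1,1]} := by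
  have hA : M0p 2 5 5 ∈ Subgroup.closure {M0p 2 5 5, M1p 2} :=
    Subgroup.subset_closure (by left; rfl)
  have hB : M1p 2 ∈ Subgroup.closure {M0p 2 5 5, M1p 2} :=
    Subgroup.subset_closure (by right; rfl)
  ext w
  constructor
  · rintro ⟨g, hg, rfl⟩
    have key : ∀ g ∈ Subgroup.closure {M0p 2 5 5, M1p 2},
        (∀ x, good x → good (Matrix.vecMul x (g : Matrix (Fin 4) (Fin 4) (ZMod 2)))) ∧
        (∀ x, good x → good (Matrix.vecMul x ((g⁻¹ : GL (Fin 4) (ZMod 2)) : Matrix (Fin 4) (Fin 4) (ZMod 2)))) := by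
      intro g hg
      induction hg using Subgroup.closure_induction with
      | mem s hs =>
        rcases hs with rfl | rfl
        · exact ⟨by rw [coe_M0p]; exact good_A2, by rw [coe_M0p_inv]; exact good_A2i⟩
        · exact ⟨by rw [coe_M1p]; exact good_B2, by rw [coe_M1p_inv]; exact good_B2⟩
      | one =>
        constructor <;> · intro x hx; simpa using hx
      | mul a b _ _ ha hb =>
        refine ⟨fun x hx => ?_, fun x hx => ?_⟩
        · rw [Units.val_mul, ← Matrix.vecMul_vecMul]
          exact hb.1 _ (ha.1 _ hx)
        · rw [mul_inv_rev, Units.val_mul, ← Matrix.vecMul_vecMul]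
          exact ha.2 _ (hb.2 _ hx)
      | inv a _ ha =>
        refine ⟨ha.2, fun x hx => ?_⟩
        rw [inv_inv]
        exact ha.1 x hx
    have hd4 : good ![0,0,0,1] := by decide
    have := (key g hg).1 _ hd4
    simpa [good, Set.mem_insert_iff] using this
  · intro hw
    simp only [Set.mem_insert_iff, Set.mem_singleton_iff] at hw
    have mk : ∀ (l : List Bool),
        (l.map (fun b => if b then M0p 2 5 5 else M1p 2)).prod ∈
          Subgroup.closure {M0p 2 5 5, M1p 2} := by
      intro l
      induction l with
      | nil => exact Subgroup.one_mem _
      | cons b t ih =>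
        rw [List.map_cons, List.prod_cons]
        exact Subgroup.mul_mem _ (by cases b; exact hB; exact hA) ih
    have coe_prod : ∀ (l : List Bool),
        (((l.map (fun b => if b then M0p 2 5 5 else M1p 2)).prod : GL (Fin 4) (ZMod 2)) :
          Matrix (Fin 4) (Fin 4) (ZMod 2)) =
        (l.map (fun b => if b then A2 else B2)).prod := by
      intro l
      induction l with
      | nil => rfl
      | cons b t ih =>
        rw [List.map_cons, List.prod_cons, List.map_cons, List.prod_cons, Units.val_mul, ih]
        cases b
        · rw [if_neg (by simp), if_neg (by simp), coe_M1p]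
        · rw [if_pos rfl, if_pos rfl, coe_M0p]
    rcases hw with rfl | rfl | rfl | rfl | rfl | rfl | rfl | rfl | rfl | rfl
    · exact ⟨1, Subgroup.one_mem _, by simp⟩
    · refine ⟨_, mk [true, false, true, true], ?_⟩
      rw [coe_prod]; decide
    · refine ⟨_, mk [true, false], ?_⟩
      rw [coe_prod]; decide
    · refine ⟨_, mk [true], ?_⟩
      rw [coe_prod]; decide
    · refine ⟨_, mk [true, true, false, true], ?_⟩
      rw [coe_prod]; decide
    · refine ⟨_, mk [true, false, true], ?_⟩
      rw [coe_prod]; decide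
    · refine ⟨_, mk [true, true, false], ?_⟩
      rw [coe_prod]; decide
    · refine ⟨_, mk [true, true], ?_⟩
      rw [coe_prod]; decide
    · refine ⟨_, mk [true, true, true, false], ?_⟩
      rw [coe_prod]; decide
    · refine ⟨_, mk [true, true, true], ?_⟩
      rw [coe_prod]; decide
end

section
/- Let d = k = 5. The orbit of the row vector δ₂ = (0,1,0,0) ∈ (ℤ/5ℤ)⁴ under right multiplication by the subgroup H₅(5,5) of GL(4, ℤ/5ℤ) generated by the reductions modulo 5 of M₀(5,5) and M₁ is exactly the set {(0,1,a,b) : a, b ∈ ℤ/5ℤ} of 25 vectors. -/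
open Matrix

lemma step0 (a b : ZMod 5) :
    vecMul ![0,1,a,b] ((M0p 5 5 5 : GL (Fin 4) (ZMod 5)) : Matrix (Fin 4) (Fin 4) (ZMod 5))
      = ![0,1,a-b,b] := by
  show vecMul ![0,1,a,b] ((M0 5 5).map (Int.castRingHom (ZMod 5))) = _
  funext j
  fin_cases j <;>
    simp [M0, Matrix.vecMul, dotProduct, Fin.sum_univ_four] <;>
    ring_nf <;>
    simp [show (5 : ZMod 5) = 0 from by decide] <;> ring

lemma step1 (a b : ZMod 5) :
    vecMul ![0,1,a,b] ((M1p 5 : GL (Fin 4) (ZMod 5)) : Matrix (Fin 4) (Fin 4) (ZMod 5))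
      = ![0,1,a,b+1] := by
  show vecMul ![0,1,a,b] (M1.map (Int.castRingHom (ZMod 5))) = _
  funext j
  fin_cases j <;>
    simp [M1, Matrix.vecMul, dotProduct, Fin.sum_univ_four, Matrix.vecHead,
      Matrix.vecTail] <;> ring

lemma pow0 (n : ℕ) (a b : ZMod 5) :
    vecMul ![0,1,a,b] (((M0p 5 5 5)^n : GL (Fin 4) (ZMod 5)) : Matrix (Fin 4) (Fin 4) (ZMod 5))
      = ![0,1,a-n*b,b] := by
  induction n with
  | zero => simp
  | succ n ih =>
    rw [pow_succ, Units.val_mul, ← vecMul_vecMul, ih, step0]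
    congr 1
    push_cast
    ring

lemma pow1 (n : ℕ) (a b : ZMod 5) :
    vecMul ![0,1,a,b] (((M1p 5)^n : GL (Fin 4) (ZMod 5)) : Matrix (Fin 4) (Fin 4) (ZMod 5))
      = ![0,1,a,b+n] := by
  induction n with
  | zero => simp
  | succ n ih =>
    rw [pow_succ, Units.val_mul, ← vecMul_vecMul, ih, step1]
    congr 1
    push_cast
    ring

def P (g : GL (Fin 4) (ZMod 5)) : Prop :=
  ∀ a b : ZMod 5, ∃ a' b' : ZMod 5,
    vecMul ![0,1,a,b] (g : Matrix (Fin 4) (Fin 4) (ZMod 5)) = ![0,1,a',b']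

lemma vecMul_cancel (g : GL (Fin 4) (ZMod 5)) {v w : Fin 4 → ZMod 5}
    (h : vecMul v (g : Matrix (Fin 4) (Fin 4) (ZMod 5)) = vecMul w g) : v = w := by
  have := congrArg (fun u => vecMul u ((g⁻¹ : GL (Fin 4) (ZMod 5)) : Matrix (Fin 4) (Fin 4) (ZMod 5))) h
  simp only [vecMul_vecMul, Units.mul_inv, vecMul_one] at this
  exact this

lemma P_inv {g : GL (Fin 4) (ZMod 5)} (hg : P g) : P g⁻¹ := by
  classical
  set F : ZMod 5 × ZMod 5 → ZMod 5 × ZMod 5 := fun p =>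
    (vecMul ![0,1,p.1,p.2] (g : Matrix (Fin 4) (Fin 4) (ZMod 5)) 2,
     vecMul ![0,1,p.1,p.2] (g : Matrix (Fin 4) (Fin 4) (ZMod 5)) 3) with hF
  have hshape : ∀ p : ZMod 5 × ZMod 5,
      vecMul ![0,1,p.1,p.2] (g : Matrix (Fin 4) (Fin 4) (ZMod 5)) = ![0,1,(F p).1,(F p).2] := by
    rintro ⟨a, b⟩
    obtain ⟨a', b', h⟩ := hg a b
    simp [hF, h]
  have hinj : Function.Injective F := by
    intro p q hpq
    have h2 : vecMul ![0,1,p.1,p.2] (g : Matrix (Fin 4) (Fin 4) (ZMod 5))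
        = vecMul ![0,1,q.1,q.2] (g : Matrix (Fin 4) (Fin 4) (ZMod 5)) := by
      rw [hshape p, hshape q, hpq]
    have := vecMul_cancel g h2
    have h3 := congrFun this 2
    have h4 := congrFun this 3
    simp at h3 h4
    exact Prod.ext h3 h4
  have hsurj : Function.Surjective F := Finite.surjective_of_injective hinj
  intro a b
  obtain ⟨p, hp⟩ := hsurj (a, b)
  refine ⟨p.1, p.2, ?_⟩
  have : vecMul ![0,1,p.1,p.2] (g : Matrix (Fin 4) (Fin 4) (ZMod 5)) = ![0,1,a,b] := by
    rw [hshape p, hp]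
  rw [← this, vecMul_vecMul, ← Units.val_mul]
  simp

theorem orbit5_delta2_55 :
    {w : Fin 4 → ZMod 5 |
      ∃ g ∈ Subgroup.closure {M0p 5 5 5, M1p 5},
        w = Matrix.vecMul ![0,1,0,0] (g : Matrix (Fin 4) (Fin 4) (ZMod 5))} =
    {w : Fin 4 → ZMod 5 | ∃ a b : ZMod 5, w = ![0, 1, a, b]} := by
  ext w
  simp only [Set.mem_setOf_eq]
  constructor
  · rintro ⟨g, hg, rfl⟩
    have hP : P g := by
      induction hg using Subgroup.closure_induction with
      | mem x hx =>
        rcases hx with h | h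
        · subst h; intro a b; exact ⟨a - b, b, step0 a b⟩
        · subst h; intro a b; exact ⟨a, b + 1, step1 a b⟩
      | one => intro a b; exact ⟨a, b, by simp⟩
      | mul x y hx hy hPx hPy =>
        intro a b
        obtain ⟨a', b', h1⟩ := hPx a b
        obtain ⟨a'', b'', h2⟩ := hPy a' b'
        exact ⟨a'', b'', by rw [Units.val_mul, ← vecMul_vecMul, h1, h2]⟩
      | inv x hx hPx => exact P_inv hPx
    obtain ⟨a, b, h⟩ := hP 0 0
    exact ⟨a, b, h⟩
  · rintro ⟨a, b, rfl⟩
    refine ⟨M1p 5 * (M0p 5 5 5)^((-a).val) * (M1p 5)^((b-1).val), ?_, ?_⟩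
    · exact mul_mem (mul_mem (Subgroup.subset_closure (by simp))
        (pow_mem (Subgroup.subset_closure (by simp)) _))
        (pow_mem (Subgroup.subset_closure (by simp)) _)
    · rw [Units.val_mul, ← vecMul_vecMul, Units.val_mul, ← vecMul_vecMul]
      have h1 : vecMul ![0,1,0,0] ((M1p 5 : GL (Fin 4) (ZMod 5)) : Matrix (Fin 4) (Fin 4) (ZMod 5))
          = ![0,1,0,1] := by simpa using step1 0 0
      rw [h1, pow0, pow1]
      have hv1 : (((-a).val : ℕ) : ZMod 5) = -a := ZMod.natCast_val (-a) |>.trans (ZMod.cast_id _ _)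
      have hv2 : (((b-1).val : ℕ) : ZMod 5) = b - 1 := ZMod.natCast_val (b-1) |>.trans (ZMod.cast_id _ _)
      rw [hv1, hv2]
      congr 1 <;> ring
end

section
/- Let d = k = 5. The orbit of the row vector δ₄ = (0,0,0,1) ∈ (ℤ/5ℤ)⁴ under right multiplication by the subgroup H₅(5,5) of GL(4, ℤ/5ℤ) generated by the reductions modulo 5 of M₀(5,5) and M₁ is exactly the set {(0,0,a,1) : a ∈ ℤ/5ℤ} of 5 vectors. -/
lemma key0 (a : ZMod 5) :
    Matrix.vecMul ![0,0,a,1] ((M0p 5 5 5 : GL (Fin 4) (ZMod 5)) : Matrix (Fin 4) (Fin 4) (ZMod 5))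
      = ![0,0,a-1,1] := by
  funext i
  fin_cases i <;>
    simp [M0p, Matrix.nonsingInvUnit, M0, Matrix.vecMul, dotProduct, unitOfInvertible,
      Fin.sum_univ_four] <;> ring_nf <;> simp [show (5 : ZMod 5) = 0 by decide]

lemma key1 (a : ZMod 5) :
    Matrix.vecMul ![0,0,a,1] ((M1p 5 : GL (Fin 4) (ZMod 5)) : Matrix (Fin 4) (Fin 4) (ZMod 5))
      = ![0,0,a,1] := by
  funext i
  fin_cases i <;>
    simp [M1p, Matrix.nonsingInvUnit, M1, Matrix.vecMul, dotProduct, unitOfInvertible,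
      Fin.sum_univ_four, Matrix.vecHead, Matrix.vecTail]

lemma inv_key {g : GL (Fin 4) (ZMod 5)} {a b : ZMod 5}
    (h : Matrix.vecMul ![0,0,b,1] (g : Matrix (Fin 4) (Fin 4) (ZMod 5)) = ![0,0,a,1]) :
    Matrix.vecMul ![0,0,a,1] ((g⁻¹ : GL (Fin 4) (ZMod 5)) : Matrix (Fin 4) (Fin 4) (ZMod 5))
      = ![0,0,b,1] := by
  rw [← h, Matrix.vecMul_vecMul, ← Units.val_mul, mul_inv_cancel, Units.val_one,
    Matrix.vecMul_one]

lemma key0inv (a : ZMod 5) :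
    Matrix.vecMul ![0,0,a,1] (((M0p 5 5 5)⁻¹ : GL (Fin 4) (ZMod 5)) : Matrix (Fin 4) (Fin 4) (ZMod 5))
      = ![0,0,a+1,1] := by
  refine inv_key ?_
  rw [key0]; ring_nf

lemma key0inv_pow (n : ℕ) :
    Matrix.vecMul ![0,0,0,1] ((((M0p 5 5 5)⁻¹) ^ n : GL (Fin 4) (ZMod 5)) : Matrix (Fin 4) (Fin 4) (ZMod 5))
      = ![0,0,(n : ZMod 5),1] := by
  induction n with
  | zero => simp
  | succ n ih =>
    rw [pow_succ, Units.val_mul, ← Matrix.vecMul_vecMul, ih, key0inv]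
    push_cast; ring_nf

theorem orbit5_delta4_55 :
    {w : Fin 4 → ZMod 5 |
      ∃ g ∈ Subgroup.closure {M0p 5 5 5, M1p 5},
        w = Matrix.vecMul ![0,0,0,1] (g : Matrix (Fin 4) (Fin 4) (ZMod 5))} =
    {w : Fin 4 → ZMod 5 | ∃ a : ZMod 5, w = ![0, 0, a, 1]} := by
  ext w
  simp only [Set.mem_setOf_eq]
  constructor
  · rintro ⟨g, hg, rfl⟩
    -- strengthen: for all a, (0,0,a,1)·g has the required form, and same for g⁻¹
    have main : ∀ g ∈ Subgroup.closure {M0p 5 5 5, M1p 5},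
        (∀ a : ZMod 5, ∃ b : ZMod 5,
          Matrix.vecMul ![0,0,a,1] (g : Matrix (Fin 4) (Fin 4) (ZMod 5)) = ![0,0,b,1]) ∧
        (∀ a : ZMod 5, ∃ b : ZMod 5,
          Matrix.vecMul ![0,0,a,1] ((g⁻¹ : GL (Fin 4) (ZMod 5)) : Matrix (Fin 4) (Fin 4) (ZMod 5)) = ![0,0,b,1]) := by
      intro g hg
      induction hg using Subgroup.closure_induction with
      | mem x hx =>
        rcases hx with rfl | rfl
        · exact ⟨fun a => ⟨a - 1, key0 a⟩, fun a => ⟨a + 1, key0inv a⟩⟩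
        · refine ⟨fun a => ⟨a, key1 a⟩, fun a => ⟨a, inv_key (key1 a)⟩⟩
      | one => exact ⟨fun a => ⟨a, by simp⟩, fun a => ⟨a, by simp⟩⟩
      | mul x y hx hy ihx ihy =>
        refine ⟨fun a => ?_, fun a => ?_⟩
        · obtain ⟨b, hb⟩ := ihx.1 a
          obtain ⟨c, hc⟩ := ihy.1 b
          exact ⟨c, by rw [Units.val_mul, ← Matrix.vecMul_vecMul, hb, hc]⟩
        · obtain ⟨b, hb⟩ := ihy.2 a
          obtain ⟨c, hc⟩ := ihx.2 b
          exact ⟨c, by rw [mul_inv_rev, Units.val_mul, ← Matrix.vecMul_vecMul, hb, hc]⟩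
      | inv x hx ihx => exact ⟨ihx.2, by simpa using ihx.1⟩
    have h0 : (![0,0,0,1] : Fin 4 → ZMod 5) = ![0,0,(0:ZMod 5),1] := by norm_num
    obtain ⟨b, hb⟩ := (main g hg).1 0
    exact ⟨b, by rw [h0, hb]⟩
  · rintro ⟨a, rfl⟩
    refine ⟨((M0p 5 5 5)⁻¹) ^ (a.val), ?_, ?_⟩
    · exact pow_mem (inv_mem (Subgroup.subset_closure (by simp))) _
    · rw [key0inv_pow, ZMod.natCast_val, ZMod.cast_id]
end

section
/- Let d = k = 5. For every prime p in {3, 7, 11, 13, 17, 19, 23}, the orbit of the row vector δ₂ = (0,1,0,0) ∈ (ℤ/pℤ)⁴ under right multiplication by the subgroup H_p(5,5) of GL(4, ℤ/pℤ) generated by the reductions modulo p of M₀(5,5) and M₁ is exactly the set of all nonzero vectors of (ℤ/pℤ)⁴. -/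
namespace Orbit55

open Matrix

variable (p : ℕ)

/-- The symplectic form preserved by the monodromy matrices. -/
def Jz : Matrix (Fin 4) (Fin 4) ℤ := !![0,0,1,0; 0,0,0,1; -1,0,0,0; 0,-1,0,0]

def Jm : Matrix (Fin 4) (Fin 4) (ZMod p) := Jz.map (Int.castRingHom (ZMod p))

def form (x y : Fin 4 → ZMod p) : ZMod p := x ⬝ᵥ (Jm p).mulVec y

def Hg : Subgroup (GL (Fin 4) (ZMod p)) := Subgroup.closure {M0p p 5 5, M1p p}

def Cset : Set (Fin 4 → ZMod p) :=
  {w | ∃ g ∈ Hg p, w = Matrix.vecMul ![0,1,0,0] (g : Matrix (Fin 4) (Fin 4) (ZMod p))}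

variable {p}

lemma memM0 : M0p p 5 5 ∈ Hg p := Subgroup.subset_closure (by simp)
lemma memM1 : M1p p ∈ Hg p := Subgroup.subset_closure (by simp)

lemma val_M0p : ((M0p p 5 5 : GL (Fin 4) (ZMod p)) : Matrix (Fin 4) (Fin 4) (ZMod p))
    = (M0 5 5).map (Int.castRingHom (ZMod p)) := rfl

lemma val_M1p : ((M1p p : GL (Fin 4) (ZMod p)) : Matrix (Fin 4) (Fin 4) (ZMod p))
    = M1.map (Int.castRingHom (ZMod p)) := rfl

lemma form_explicit (x y : Fin 4 → ZMod p) :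
    form p x y = x 0 * y 2 - x 2 * y 0 + x 1 * y 3 - x 3 * y 1 := by
  simp [form, Jm, Jz, Matrix.mulVec, dotProduct, Fin.sum_univ_four, Matrix.map_apply, Matrix.vecHead, Matrix.vecTail]
  ring

lemma form_self (x : Fin 4 → ZMod p) : form p x x = 0 := by rw [form_explicit]; ring

lemma form_add_left (x y z : Fin 4 → ZMod p) :
    form p (x + y) z = form p x z + form p y z := by
  simp only [form_explicit, Pi.add_apply]; ring

lemma form_add_right (x y z : Fin 4 → ZMod p) :
    form p x (y + z) = form p x y + form p x z := by
  simp only [form_explicit, Pi.add_apply]; ring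

lemma form_smul_left (c : ZMod p) (x z : Fin 4 → ZMod p) :
    form p (c • x) z = c * form p x z := by
  simp only [form_explicit, Pi.smul_apply, smul_eq_mul]; ring

lemma form_swap (x y : Fin 4 → ZMod p) : form p x y = - form p y x := by
  simp only [form_explicit]; ring

/-- every element of the closure preserves the symplectic form `Jm`. -/
lemma J_inv : ∀ g ∈ Hg p, (g : Matrix (Fin 4) (Fin 4) (ZMod p)) * Jm p
    * ((g : Matrix (Fin 4) (Fin 4) (ZMod p)))ᵀ = Jm p := by
  intro g hg
  have hmap : ∀ (M : Matrix (Fin 4) (Fin 4) ℤ), M * Jz * Mᵀ = Jz →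
      (M.map (Int.castRingHom (ZMod p))) * Jm p * (M.map (Int.castRingHom (ZMod p)))ᵀ = Jm p := by
    intro M h
    have h2 := congrArg (Int.castRingHom (ZMod p)).mapMatrix h
    simp only [_root_.map_mul] at h2
    simpa only [RingHom.mapMatrix_apply, Matrix.transpose_map, Jm] using h2
  induction hg using Subgroup.closure_induction with
  | one => simp
  | mul a b _ _ ha hb =>
    rw [Units.val_mul, Matrix.transpose_mul]
    calc (a : Matrix (Fin 4) (Fin 4) (ZMod p)) * b * Jm p * ((b : Matrix (Fin 4) (Fin 4) (ZMod p))ᵀ * (a : Matrix (Fin 4) (Fin 4) (ZMod p))ᵀ)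
        = (a : Matrix (Fin 4) (Fin 4) (ZMod p)) * ((b : Matrix (Fin 4) (Fin 4) (ZMod p)) * Jm p * (b : Matrix (Fin 4) (Fin 4) (ZMod p))ᵀ) * (a : Matrix (Fin 4) (Fin 4) (ZMod p))ᵀ := by
          simp only [Matrix.mul_assoc]
      _ = Jm p := by rw [hb, ha]
  | inv a _ ha =>
    have hBA : ((a⁻¹ : GL (Fin 4) (ZMod p)) : Matrix (Fin 4) (Fin 4) (ZMod p)) * (a : Matrix (Fin 4) (Fin 4) (ZMod p)) = 1 := by
      rw [← Units.val_mul, inv_mul_cancel, Units.val_one]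
    have hAB : (a : Matrix (Fin 4) (Fin 4) (ZMod p)) * ((a⁻¹ : GL (Fin 4) (ZMod p)) : Matrix (Fin 4) (Fin 4) (ZMod p)) = 1 := by
      rw [← Units.val_mul, mul_inv_cancel, Units.val_one]
    set B := ((a⁻¹ : GL (Fin 4) (ZMod p)) : Matrix (Fin 4) (Fin 4) (ZMod p))
    set A := (a : Matrix (Fin 4) (Fin 4) (ZMod p))
    calc B * Jm p * Bᵀ = B * (A * Jm p * Aᵀ) * Bᵀ := by rw [ha]
      _ = (B * A) * Jm p * ((B * A)ᵀ) := by
          rw [Matrix.transpose_mul]; simp only [Matrix.mul_assoc]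
      _ = Jm p := by rw [hBA, Matrix.transpose_one, Matrix.one_mul, Matrix.mul_one]
  | mem a hmem =>
    simp only [Set.mem_insert_iff, Set.mem_singleton_iff] at hmem
    rcases hmem with h | h
    · rw [h, val_M0p]; exact hmap _ (by decide)
    · rw [h, val_M1p]; exact hmap _ (by decide)

lemma form_vecMul (g : GL (Fin 4) (ZMod p)) (hg : g ∈ Hg p) (x y : Fin 4 → ZMod p) :
    form p (vecMul x (g : Matrix (Fin 4) (Fin 4) (ZMod p)))
      (vecMul y (g : Matrix (Fin 4) (Fin 4) (ZMod p))) = form p x y := by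
  have hJ := J_inv g hg
  unfold form
  rw [show vecMul y (g : Matrix (Fin 4) (Fin 4) (ZMod p))
      = ((g : Matrix (Fin 4) (Fin 4) (ZMod p)))ᵀ *ᵥ y from (mulVec_transpose _ y).symm,
    mulVec_mulVec, dotProduct_mulVec, vecMul_vecMul, ← Matrix.mul_assoc, hJ, ← dotProduct_mulVec]

lemma vecMul_M1p (z : Fin 4 → ZMod p) :
    vecMul z ((M1p p : GL (Fin 4) (ZMod p)) : Matrix (Fin 4) (Fin 4) (ZMod p))
      = z + z 1 • (![0,0,0,1] : Fin 4 → ZMod p) := by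
  funext j
  fin_cases j <;>
    simp [val_M1p, M1, Matrix.vecMul, dotProduct, Fin.sum_univ_four, Matrix.map_apply,
      Matrix.vecHead, Matrix.vecTail] <;> push_cast <;> ring

lemma vecMul_M1p_pow (n : ℕ) (z : Fin 4 → ZMod p) :
    vecMul z (((M1p p ^ n : GL (Fin 4) (ZMod p))) : Matrix (Fin 4) (Fin 4) (ZMod p))
      = z + ((n : ZMod p) * z 1) • (![0,0,0,1] : Fin 4 → ZMod p) := by
  induction n with
  | zero => simp
  | succ n ih =>
    rw [pow_succ, Units.val_mul, ← vecMul_vecMul, ih, vecMul_M1p]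
    have h1 : (z + ((n : ZMod p) * z 1) • (![0,0,0,1] : Fin 4 → ZMod p)) 1 = z 1 := by simp
    rw [h1]
    push_cast
    module

lemma mem_of_mem_mul (u : Fin 4 → ZMod p) (hu : u ∈ Cset p) (t : GL (Fin 4) (ZMod p))
    (ht : t ∈ Hg p) : vecMul u (t : Matrix (Fin 4) (Fin 4) (ZMod p)) ∈ Cset p := by
  obtain ⟨g, hgH, hg⟩ := hu
  exact ⟨g * t, mul_mem hgH ht, by rw [hg, Units.val_mul, vecMul_vecMul]⟩

section Key

variable [Fact p.Prime]

/-- The key closure property: the orbit is closed under symplectic transvections with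
directions in the orbit (given that `δ₄` is in the orbit). -/
lemma key (hD : (![0,0,0,1] : Fin 4 → ZMod p) ∈ Cset p) {u v : Fin 4 → ZMod p}
    (hu : u ∈ Cset p) (hv : v ∈ Cset p) (c : ZMod p) :
    u + (c * form p u v) • v ∈ Cset p := by
  obtain ⟨g0, hg0, hδ⟩ := hD
  obtain ⟨gv, hgv, hv'⟩ := hv
  set h : GL (Fin 4) (ZMod p) := g0⁻¹ * gv with hh
  have hhH : h ∈ Hg p := mul_mem (inv_mem hg0) hgv
  have hd4 : vecMul (![0,0,0,1] : Fin 4 → ZMod p)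
      ((h : GL (Fin 4) (ZMod p)) : Matrix (Fin 4) (Fin 4) (ZMod p)) = v := by
    have hg0inv : vecMul (vecMul (![0,1,0,0] : Fin 4 → ZMod p)
        ((g0 : GL (Fin 4) (ZMod p)) : Matrix (Fin 4) (Fin 4) (ZMod p)))
        ((g0⁻¹ : GL (Fin 4) (ZMod p)) : Matrix (Fin 4) (Fin 4) (ZMod p)) = ![0,1,0,0] := by
      rw [vecMul_vecMul, ← Units.val_mul, mul_inv_cancel, Units.val_one, vecMul_one]
    rw [hδ, hh, hv',
      show ((g0⁻¹ * gv : GL (Fin 4) (ZMod p)) : Matrix (Fin 4) (Fin 4) (ZMod p))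
        = ((g0⁻¹ : GL (Fin 4) (ZMod p)) : Matrix (Fin 4) (Fin 4) (ZMod p))
          * ((gv : GL (Fin 4) (ZMod p)) : Matrix (Fin 4) (Fin 4) (ZMod p)) from Units.val_mul _ _,
      ← vecMul_vecMul, hg0inv]
  have hd4' : vecMul v ((h⁻¹ : GL (Fin 4) (ZMod p)) : Matrix (Fin 4) (Fin 4) (ZMod p))
      = ![0,0,0,1] := by
    rw [← hd4, vecMul_vecMul, ← Units.val_mul, mul_inv_cancel, Units.val_one, vecMul_one]
  set n : ℕ := (c : ZMod p).val with hns
  have hn : ((n : ℕ) : ZMod p) = c := ZMod.natCast_rightInverse c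
  set t : GL (Fin 4) (ZMod p) := h⁻¹ * (M1p p) ^ n * h with hts
  have htH : t ∈ Hg p := mul_mem (mul_mem (inv_mem hhH) (pow_mem memM1 n)) hhH
  have hmem := mem_of_mem_mul u hu t htH
  set y : Fin 4 → ZMod p := vecMul u ((h⁻¹ : GL (Fin 4) (ZMod p)) : Matrix (Fin 4) (Fin 4) (ZMod p)) with hy
  have hyu : vecMul y ((h : GL (Fin 4) (ZMod p)) : Matrix (Fin 4) (Fin 4) (ZMod p)) = u := by
    rw [hy, vecMul_vecMul, ← Units.val_mul, inv_mul_cancel, Units.val_one, vecMul_one]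
  have hy1 : y 1 = form p u v := by
    have h1 : form p y (![0,0,0,1] : Fin 4 → ZMod p) = y 1 := by
      rw [form_explicit]; simp
    rw [← h1, ← hd4', hy]
    exact form_vecMul _ (inv_mem hhH) u v
  have hcalc : vecMul u ((t : GL (Fin 4) (ZMod p)) : Matrix (Fin 4) (Fin 4) (ZMod p))
      = u + (c * form p u v) • v := by
    rw [hts, Units.val_mul, Units.val_mul, ← vecMul_vecMul, ← vecMul_vecMul, ← hy,
      vecMul_M1p_pow, hn, add_vecMul, smul_vecMul, hyu, hd4, hy1]
  rwa [hcalc] at hmem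

variable (hD : (![0,0,0,1] : Fin 4 → ZMod p) ∈ Cset p)
include hD

lemma step {u v : Fin 4 → ZMod p} (hu : u ∈ Cset p) (hv : v ∈ Cset p)
    (hf : form p u v ≠ 0) (t : ZMod p) : u + t • v ∈ Cset p := by
  have := key hD hu hv (t / form p u v)
  rwa [div_mul_cancel₀ _ hf] at this

lemma scale {u v : Fin 4 → ZMod p} (hu : u ∈ Cset p) (hv : v ∈ Cset p)
    (hf : form p u v ≠ 0) {l : ZMod p} (hl : l ≠ 0) : l • u ∈ Cset p := by
  have h1 : u + v ∈ Cset p := by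
    have := step hD hu hv hf 1; rwa [one_smul] at this
  have hf2 : form p (u + v) u ≠ 0 := by
    have e2 : form p (u + v) u = - form p u v := by
      rw [form_add_left, form_self, form_swap v u]; ring
    rw [e2]; exact neg_ne_zero.mpr hf
  have h2 : (l + 1) • u + v ∈ Cset p := by
    have := step hD h1 hu hf2 l
    have heq : u + v + l • u = (l + 1) • u + v := by module
    rwa [heq] at this
  have hf3 : form p ((l + 1) • u + v) (u + v) ≠ 0 := by
    have e3 : form p ((l + 1) • u + v) (u + v) = l * form p u v := by
      rw [form_add_left, form_smul_left, form_add_right, form_add_right, form_self, form_self,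
        form_swap v u]
      ring
    rw [e3]; exact mul_ne_zero hl hf
  have := step hD h2 h1 hf3 (-1)
  have heq : (l + 1) • u + v + (-1 : ZMod p) • (u + v) = l • u := by module
  rwa [heq] at this

lemma plane {u v : Fin 4 → ZMod p} (hu : u ∈ Cset p) (hv : v ∈ Cset p)
    (hf : form p u v ≠ 0) {a b : ZMod p} (hab : ¬(a = 0 ∧ b = 0)) :
    a • u + b • v ∈ Cset p := by
  by_cases ha : a = 0
  · have hb : b ≠ 0 := fun hb => hab ⟨ha, hb⟩
    have hf' : form p v u ≠ 0 := by
      rw [form_swap]; exact neg_ne_zero.mpr hf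
    have := scale hD hv hu hf' hb
    rw [ha, zero_smul, zero_add]; exact this
  · have h1 : a • u ∈ Cset p := scale hD hu hv hf ha
    have hf2 : form p (a • u) v ≠ 0 := by
      rw [form_smul_left]; exact mul_ne_zero ha hf
    exact step hD h1 hv hf2 b

end Key

lemma delta2_mem : (![0,1,0,0] : Fin 4 → ZMod p) ∈ Cset p :=
  ⟨1, one_mem _, by rw [Units.val_one, vecMul_one]⟩


lemma vecMul_cast (v : Fin 4 → ℤ) (M : Matrix (Fin 4) (Fin 4) ℤ) :
    vecMul (fun i => ((v i : ℤ) : ZMod p)) (M.map (Int.castRingHom (ZMod p)))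
      = fun i => ((vecMul v M i : ℤ) : ZMod p) := by
  funext j
  simp [Matrix.vecMul, dotProduct, Fin.sum_univ_four, Matrix.map_apply]

lemma cast_d2 : (![0,1,0,0] : Fin 4 → ZMod p) = fun i => ((![0,1,0,0] : Fin 4 → ℤ) i : ZMod p) := by
  funext i; fin_cases i <;> simp [Matrix.vecHead, Matrix.vecTail]

lemma b3_mem : (![0,-4,-1,1] : Fin 4 → ZMod p) ∈ Cset p := by
  refine ⟨M1p p * M0p p 5 5, mul_mem memM1 memM0, ?_⟩
  rw [Units.val_mul, val_M1p, val_M0p, ← Matrix.map_mul, cast_d2, vecMul_cast,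
    show Matrix.vecMul ![0,1,0,0] (M1 * M0 5 5) = ![0,-4,-1,1] from by decide]
  funext i
  fin_cases i <;> simp [Matrix.vecHead, Matrix.vecTail]

lemma b4_mem : (![5,-4,-1,-5] : Fin 4 → ZMod p) ∈ Cset p := by
  refine ⟨M1p p * M0p p 5 5 * M1p p * M0p p 5 5 * M1p p * M0p p 5 5 * M1p p * M1p p,
    mul_mem (mul_mem (mul_mem (mul_mem (mul_mem (mul_mem (mul_mem memM1 memM0) memM1) memM0) memM1) memM0) memM1) memM1, ?_⟩
  simp only [Units.val_mul, val_M1p, val_M0p, ← Matrix.map_mul]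
  rw [cast_d2, vecMul_cast,
    show Matrix.vecMul ![0,1,0,0] (M1 * M0 5 5 * M1 * M0 5 5 * M1 * M0 5 5 * M1 * M1) = ![5,-4,-1,-5] from by decide]
  funext i
  fin_cases i <;> simp [Matrix.vecHead, Matrix.vecTail]

section Main

variable [Fact p.Prime]
variable (h2 : (2 : ZMod p) ≠ 0) (h5 : (5 : ZMod p) ≠ 0) (h29 : (29 : ZMod p) ≠ 0)
variable (hD : (![0,0,0,1] : Fin 4 → ZMod p) ∈ Cset p)
variable (hu0 : (![5,-4,0,-5] : Fin 4 → ZMod p) ∈ Cset p)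

include h2 h5 h29 hD hu0

lemma four_ne : (4 : ZMod p) ≠ 0 := by
  intro h; apply h2
  have h4 : (4 : ZMod p) = 2 * 2 := by norm_num
  rcases mul_eq_zero.mp (h4 ▸ h) with h' | h' <;> exact h'

lemma hplane (y : Fin 4 → ZMod p) (hy : y ≠ 0) (h0 : y 0 = 0) : y ∈ Cset p := by
  have h4 : (4 : ZMod p) ≠ 0 := four_ne h2 h5 h29 hD hu0
  have hb1 := delta2_mem (p := p)
  have hb2 : (![0,0,0,1] : Fin 4 → ZMod p) ∈ Cset p := hD
  have hb3 := b3_mem (p := p)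
  have hb4 := b4_mem (p := p)
  have hf12 : form p ![0,1,0,0] (![0,0,0,1] : Fin 4 → ZMod p) ≠ 0 := by
    rw [form_explicit]; simp
  have reduce : ∀ v : Fin 4 → ZMod p, v ∈ Cset p → v 0 = 0 → v 2 = -1 →
      form p y v ≠ 0 → y ∈ Cset p := by
    intro v hv hv0 hv2 hf
    set u : Fin 4 → ZMod p := y + y 2 • v with hu
    have hu0' : u 0 = 0 := by
      simp only [hu, Pi.add_apply, Pi.smul_apply, smul_eq_mul, h0, hv0, mul_zero, add_zero]
    have hu2' : u 2 = 0 := by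
      simp only [hu, Pi.add_apply, Pi.smul_apply, smul_eq_mul, hv2]
      ring
    have hfu : form p u v = form p y v := by
      rw [hu, form_add_left, form_smul_left, form_self, mul_zero, add_zero]
    have hune : ¬(u 1 = 0 ∧ u 3 = 0) := by
      rintro ⟨e1, e3⟩
      apply hf
      rw [← hfu, form_explicit, hu0', hu2', e1, e3]
      ring
    have hrep : u = u 1 • ![0,1,0,0] + u 3 • (![0,0,0,1] : Fin 4 → ZMod p) := by
      funext i
      fin_cases i <;> simp [hu0', hu2']
    have huC : u ∈ Cset p := by
      rw [hrep]; exact plane hD hb1 hb2 hf12 hune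
    have hback : y = u + (- y 2) • v := by rw [hu]; module
    rw [hback]
    exact step hD huC hv (by rw [hfu]; exact hf) _
  by_cases h2c : y 2 = 0
  · have hne : ¬(y 1 = 0 ∧ y 3 = 0) := by
      rintro ⟨e1, e3⟩
      apply hy
      funext i; fin_cases i <;> simp [h0, h2c, e1, e3]
    have hrep : y = y 1 • ![0,1,0,0] + y 3 • (![0,0,0,1] : Fin 4 → ZMod p) := by
      funext i; fin_cases i <;> simp [h0, h2c]
    rw [hrep]; exact plane hD hb1 hb2 hf12 hne
  · by_cases hA : form p y ![0,-4,-1,1] ≠ 0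
    · exact reduce _ hb3 (by simp) (by simp) hA
    · by_cases hB : form p y (![0,-4,-1,1] + ![0,1,0,0] : Fin 4 → ZMod p) ≠ 0
      · refine reduce _ ?_ (by simp) (by simp) hB
        have hf31 : form p ![0,-4,-1,1] (![0,1,0,0] : Fin 4 → ZMod p) ≠ 0 := by
          rw [form_explicit]; simp
        have := plane hD hb3 hb1 hf31 (a := 1) (b := 1) (by simp)
        simpa using this
      · by_cases hC : form p y (![0,-4,-1,1] + ![0,0,0,1] : Fin 4 → ZMod p) ≠ 0
        · refine reduce _ ?_ (by simp) (by simp) hC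
          have hf32 : form p ![0,-4,-1,1] (![0,0,0,1] : Fin 4 → ZMod p) ≠ 0 := by
            rw [form_explicit]; simpa using h4
          have := plane hD hb3 hb2 hf32 (a := 1) (b := 1) (by simp)
          simpa using this
        · push_neg at hA hB hC
          rw [form_add_right, hA, zero_add] at hB hC
          have hy3 : y 3 = 0 := by
            have e : form p y ![0,1,0,0] = - y 3 := by rw [form_explicit]; simp
            rw [e] at hB; exact neg_eq_zero.mp hB
          have hy1 : y 1 = 0 := by
            have e : form p y ![0,0,0,1] = y 1 := by rw [form_explicit]; simp
            rwa [e] at hC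
          have hrep : y = y 2 • ![5,-4,0,-5] + (- y 2) • (![5,-4,-1,-5] : Fin 4 → ZMod p) := by
            funext i; fin_cases i <;> simp [h0, hy1, hy3] <;> ring
          have hfu0b4 : form p ![5,-4,0,-5] (![5,-4,-1,-5] : Fin 4 → ZMod p) ≠ 0 := by
            have e : form p ![5,-4,0,-5] (![5,-4,-1,-5] : Fin 4 → ZMod p) = -5 := by
              rw [form_explicit]; simp; norm_num
            rw [e]; exact neg_ne_zero.mpr h5
          rw [hrep]
          exact plane hD hu0 hb4 hfu0b4 (fun hcon => h2c hcon.1)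

lemma main_core (w : Fin 4 → ZMod p) (hw : w ≠ 0) : w ∈ Cset p := by
  have h4 : (4 : ZMod p) ≠ 0 := four_ne h2 h5 h29 hD hu0
  have hb1 := delta2_mem (p := p)
  have hb2 : (![0,0,0,1] : Fin 4 → ZMod p) ∈ Cset p := hD
  have hb3 := b3_mem (p := p)
  have hb4 := b4_mem (p := p)
  by_cases h0 : w 0 = 0
  · exact hplane h2 h5 h29 hD hu0 w hw h0
  · have reduce : ∀ v : Fin 4 → ZMod p, v ∈ Cset p → v 0 = 5 →
        form p v ![0,1,0,0] ≠ 0 → form p w v ≠ 0 → w ∈ Cset p := by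
      intro v hv hv0 hpart hf
      set t : ZMod p := w 0 / 5 with hts
      set u : Fin 4 → ZMod p := w + (- t) • v with hu
      have hu00 : u 0 = 0 := by
        simp only [hu, Pi.add_apply, Pi.smul_apply, hv0, smul_eq_mul, hts]
        field_simp; ring
      by_cases huz : u = 0
      · have hwt : w = t • v := by
          have h' := congrArg (fun z => z + t • v) huz
          simp only [hu] at h'
          have h'' : w + (- t) • v + t • v = w := by module
          rw [h''] at h'
          simpa using h'
        have ht : t ≠ 0 := by
          intro h; apply hw; rw [hwt, h, zero_smul]
        rw [hwt]
        exact scale hD hv hb1 hpart ht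
      · have huC : u ∈ Cset p := hplane h2 h5 h29 hD hu0 u huz hu00
        have hfu : form p u v = form p w v := by
          rw [hu, form_add_left, form_smul_left, form_self, mul_zero, add_zero]
        have hback : w = u + t • v := by rw [hu]; module
        rw [hback]
        exact step hD huC hv (by rw [hfu]; exact hf) _
    have hf41 : form p ![5,-4,-1,-5] (![0,1,0,0] : Fin 4 → ZMod p) ≠ 0 := by
      rw [form_explicit]; simpa using h5
    by_cases hA : form p w ![5,-4,-1,-5] ≠ 0
    · exact reduce _ hb4 (by simp) hf41 hA
    · by_cases hB : form p w (![5,-4,-1,-5] + ![0,1,0,0] : Fin 4 → ZMod p) ≠ 0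
      · refine reduce _ ?_ (by simp) ?_ hB
        · have := plane hD hb4 hb1 hf41 (a := 1) (b := 1) (by simp)
          simpa using this
        · have e : form p (![5,-4,-1,-5] + ![0,1,0,0] : Fin 4 → ZMod p) ![0,1,0,0]
              = (5 : ZMod p) := by
            rw [form_add_left, form_self, add_zero, form_explicit]; simp
          rw [e]; exact h5
      · by_cases hC : form p w (![5,-4,-1,-5] + ![0,0,0,1] : Fin 4 → ZMod p) ≠ 0
        · refine reduce _ ?_ (by simp) ?_ hC
          · have hf42 : form p ![5,-4,-1,-5] (![0,0,0,1] : Fin 4 → ZMod p) ≠ 0 := by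
              rw [form_explicit]; simpa using h4
            have := plane hD hb4 hb2 hf42 (a := 1) (b := 1) (by simp)
            simpa using this
          · have e : form p (![5,-4,-1,-5] + ![0,0,0,1] : Fin 4 → ZMod p) ![0,1,0,0]
                = (4 : ZMod p) := by
              rw [form_add_left, form_explicit, form_explicit]
              simp
              ring
            rw [e]; exact h4
        · by_cases hE : form p w (![5,-4,-1,-5] + ![0,-4,-1,1] : Fin 4 → ZMod p) ≠ 0
          · refine reduce _ ?_ (by simp) ?_ hE
            · have hf43 : form p ![5,-4,-1,-5] (![0,-4,-1,1] : Fin 4 → ZMod p) ≠ 0 := by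
                have e : form p ![5,-4,-1,-5] (![0,-4,-1,1] : Fin 4 → ZMod p) = -29 := by
                  rw [form_explicit]; simp; norm_num
                rw [e]; exact neg_ne_zero.mpr h29
              have := plane hD hb4 hb3 hf43 (a := 1) (b := 1) (by simp)
              simpa using this
            · have e : form p (![5,-4,-1,-5] + ![0,-4,-1,1] : Fin 4 → ZMod p) ![0,1,0,0]
                  = (4 : ZMod p) := by
                rw [form_add_left, form_explicit, form_explicit]
                simp
                ring
              rw [e]; exact h4
          · exfalso
            push_neg at hA hB hC hE
            rw [form_add_right, hA, zero_add] at hB hC hE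
            have hw3 : w 3 = 0 := by
              have e : form p w ![0,1,0,0] = - w 3 := by rw [form_explicit]; simp
              rw [e] at hB; exact neg_eq_zero.mp hB
            have hw1 : w 1 = 0 := by
              have e : form p w ![0,0,0,1] = w 1 := by rw [form_explicit]; simp
              rwa [e] at hC
            have e : form p w ![0,-4,-1,1] = - w 0 + w 1 + 4 * w 3 := by
              rw [form_explicit]
              simp [Matrix.vecHead, Matrix.vecTail]
              try ring
            rw [hE, hw1, hw3] at e
            apply h0
            linear_combination e

end Main

set_option maxRecDepth 40000

lemma d4_mem_3 : (![0,0,0,1] : Fin 4 → ZMod 3) ∈ Cset 3 :=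
  ⟨M1p 3 * M0p 3 5 5 * M0p 3 5 5 * M0p 3 5 5 * M0p 3 5 5 * M0p 3 5 5 * M0p 3 5 5, mul_mem (mul_mem (mul_mem (mul_mem (mul_mem (mul_mem (memM1) (memM0)) (memM0)) (memM0)) (memM0)) (memM0)) (memM0), by decide⟩

lemma u0_mem_3 : (![5,-4,0,-5] : Fin 4 → ZMod 3) ∈ Cset 3 :=
  ⟨M1p 3 * M1p 3 * M0p 3 5 5 * M0p 3 5 5 * M0p 3 5 5 * M0p 3 5 5 * M1p 3 * M0p 3 5 5, mul_mem (mul_mem (mul_mem (mul_mem (mul_mem (mul_mem (mul_mem (memM1) (memM1)) (memM0)) (memM0)) (memM0)) (memM0)) (memM1)) (memM0), by decide⟩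

lemma d4_mem_7 : (![0,0,0,1] : Fin 4 → ZMod 7) ∈ Cset 7 :=
  ⟨M1p 7 * M1p 7 * M1p 7 * M1p 7 * M0p 7 5 5 * M0p 7 5 5 * M1p 7 * M1p 7 * M1p 7 * M0p 7 5 5 * M1p 7 * M1p 7 * M0p 7 5 5 * M1p 7 * M0p 7 5 5, mul_mem (mul_mem (mul_mem (mul_mem (mul_mem (mul_mem (mul_mem (mul_mem (mul_mem (mul_mem (mul_mem (mul_mem (mul_mem (mul_mem (memM1) (memM1)) (memM1)) (memM1)) (memM0)) (memM0)) (memM1)) (memM1)) (memM1)) (memM0)) (memM1)) (memM1)) (memM0)) (memM1)) (memM0), by decide⟩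

lemma u0_mem_7 : (![5,-4,0,-5] : Fin 4 → ZMod 7) ∈ Cset 7 :=
  ⟨M1p 7 * M0p 7 5 5 * M0p 7 5 5 * M0p 7 5 5 * M0p 7 5 5 * M0p 7 5 5 * M1p 7 * M0p 7 5 5 * M0p 7 5 5 * M0p 7 5 5 * M1p 7 * M1p 7, mul_mem (mul_mem (mul_mem (mul_mem (mul_mem (mul_mem (mul_mem (mul_mem (mul_mem (mul_mem (mul_mem (memM1) (memM0)) (memM0)) (memM0)) (memM0)) (memM0)) (memM1)) (memM0)) (memM0)) (memM0)) (memM1)) (memM1), by decide⟩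

lemma d4_mem_11 : (![0,0,0,1] : Fin 4 → ZMod 11) ∈ Cset 11 :=
  ⟨M1p 11 * M0p 11 5 5 * M0p 11 5 5 * M0p 11 5 5 * M1p 11 * M1p 11 * M0p 11 5 5 * M0p 11 5 5 * M1p 11 * M0p 11 5 5 * M0p 11 5 5 * M1p 11 * M1p 11 * M0p 11 5 5 * M0p 11 5 5, mul_mem (mul_mem (mul_mem (mul_mem (mul_mem (mul_mem (mul_mem (mul_mem (mul_mem (mul_mem (mul_mem (mul_mem (mul_mem (mul_mem (memM1) (memM0)) (memM0)) (memM0)) (memM1)) (memM1)) (memM0)) (memM0)) (memM1)) (memM0)) (memM0)) (memM1)) (memM1)) (memM0)) (memM0), by decide⟩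

lemma u0_mem_11 : (![5,-4,0,-5] : Fin 4 → ZMod 11) ∈ Cset 11 :=
  ⟨M1p 11 * M1p 11 * M0p 11 5 5 * M0p 11 5 5 * M1p 11 * M0p 11 5 5 * M0p 11 5 5 * M0p 11 5 5, mul_mem (mul_mem (mul_mem (mul_mem (mul_mem (mul_mem (mul_mem (memM1) (memM1)) (memM0)) (memM0)) (memM1)) (memM0)) (memM0)) (memM0), by decide⟩

lemma d4_mem_13 : (![0,0,0,1] : Fin 4 → ZMod 13) ∈ Cset 13 :=
  ⟨M1p 13 * M0p 13 5 5 * M0p 13 5 5 * M0p 13 5 5 * M1p 13 * M0p 13 5 5 * M1p 13 * M1p 13 * M1p 13 * M1p 13 * M1p 13 * M0p 13 5 5 * M0p 13 5 5 * M0p 13 5 5 * M0p 13 5 5 * M1p 13 * M1p 13 * M0p 13 5 5, mul_mem (mul_mem (mul_mem (mul_mem (mul_mem (mul_mem (mul_mem (mul_mem (mul_mem (mul_mem (mul_mem (mul_mem (mul_mem (mul_mem (mul_mem (mul_mem (mul_mem (memM1) (memM0)) (memM0)) (memM0)) (memM1)) (memM0)) (memM1)) (memM1)) (memM1)) (memM1))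 (memM1)) (memM0)) (memM0)) (memM0)) (memM0)) (memM1)) (memM1)) (memM0), by decide⟩

lemma u0_mem_13 : (![5,-4,0,-5] : Fin 4 → ZMod 13) ∈ Cset 13 :=
  ⟨M1p 13 * M1p 13 * M0p 13 5 5 * M0p 13 5 5 * M1p 13 * M0p 13 5 5 * M0p 13 5 5 * M0p 13 5 5 * M0p 13 5 5 * M1p 13, mul_mem (mul_mem (mul_mem (mul_mem (mul_mem (mul_mem (mul_mem (mul_mem (mul_mem (memM1) (memM1)) (memM0)) (memM0)) (memM1)) (memM0)) (memM0)) (memM0)) (memM0)) (memM1), by decide⟩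

lemma d4_mem_17 : (![0,0,0,1] : Fin 4 → ZMod 17) ∈ Cset 17 :=
  ⟨M1p 17 * M1p 17 * M0p 17 5 5 * M0p 17 5 5 * M0p 17 5 5 * M0p 17 5 5 * M1p 17 * M1p 17 * M1p 17 * M1p 17 * M0p 17 5 5 * M1p 17 * M1p 17 * M1p 17 * M0p 17 5 5 * M0p 17 5 5, mul_mem (mul_mem (mul_mem (mul_mem (mul_mem (mul_mem (mul_mem (mul_mem (mul_mem (mul_mem (mul_mem (mul_mem (mul_mem (mul_mem (mul_mem (memM1) (memM1)) (memM0)) (memM0)) (memM0)) (memM0)) (memM1)) (memM1)) (memM1)) (memM1)) (memM0)) (memM1)) (memM1)) (memM1)) (memM0)) (memM0), by decide⟩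

lemma u0_mem_17 : (![5,-4,0,-5] : Fin 4 → ZMod 17) ∈ Cset 17 :=
  ⟨M1p 17 * M1p 17 * M1p 17 * M0p 17 5 5 * M1p 17 * M0p 17 5 5 * M0p 17 5 5 * M1p 17 * M1p 17 * M1p 17 * M1p 17 * M0p 17 5 5 * M1p 17 * M1p 17 * M0p 17 5 5 * M0p 17 5 5 * M0p 17 5 5 * M1p 17, mul_mem (mul_mem (mul_mem (mul_mem (mul_mem (mul_mem (mul_mem (mul_mem (mul_mem (mul_mem (mul_mem (mul_mem (mul_mem (mul_mem (mul_mem (mul_mem (mul_mem (memM1) (memM1)) (memM1)) (memM0)) (memM1)) (memM0)) (memM0)) (memM1)) (memM1)) (memM1)) (memM1)) (memM0)) (memM1)) (memM1)) (memM0)) (memM0)) (memM0)) (memM1), by decide⟩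

lemma d4_mem_19 : (![0,0,0,1] : Fin 4 → ZMod 19) ∈ Cset 19 :=
  ⟨M1p 19 * M1p 19 * M0p 19 5 5 * M0p 19 5 5 * M1p 19 * M1p 19 * M0p 19 5 5 * M1p 19 * M1p 19 * M0p 19 5 5 * M0p 19 5 5 * M1p 19 * M1p 19 * M1p 19 * M1p 19 * M1p 19 * M1p 19 * M0p 19 5 5 * M0p 19 5 5, mul_mem (mul_mem (mul_mem (mul_mem (mul_mem (mul_mem (mul_mem (mul_mem (mul_mem (mul_mem (mul_mem (mul_mem (mul_mem (mul_mem (mul_mem (mul_mem (mul_mem (mul_mem (memM1) (memM1)) (memM0)) (memM0)) (memM1)) (memM1)) (memM0)) (memM1)) (memM1)) (memM0)) (memM0)) (memM1)) (memM1)) (memM1)) (memM1)) (memM1)) (memM1)) (memM0)) (memM0), by decide⟩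

lemma u0_mem_19 : (![5,-4,0,-5] : Fin 4 → ZMod 19) ∈ Cset 19 :=
  ⟨M1p 19 * M0p 19 5 5 * M0p 19 5 5 * M0p 19 5 5 * M0p 19 5 5 * M0p 19 5 5 * M0p 19 5 5 * M1p 19 * M0p 19 5 5 * M1p 19 * M1p 19 * M0p 19 5 5 * M0p 19 5 5 * M0p 19 5 5 * M1p 19 * M0p 19 5 5 * M0p 19 5 5 * M0p 19 5 5 * M1p 19 * M1p 19, mul_mem (mul_mem (mul_mem (mul_mem (mul_mem (mul_mem (mul_mem (mul_mem (mul_mem (mul_mem (mul_mem (mul_mem (mul_mem (mul_mem (mul_mem (mul_mem (mul_mem (mul_mem (mul_mem (memM1) (memM0)) (memM0)) (memM0)) (memM0)) (memM0)) (memM0)) (memM1)) (memM0)) (memM1)) (memM1)) (memM0)) (memM0)) (memM0)) (memM1)) (memM0)) (memM0)) (memM0)) (memM1)) (memM1), by decide⟩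

lemma d4_mem_23 : (![0,0,0,1] : Fin 4 → ZMod 23) ∈ Cset 23 :=
  ⟨M1p 23 * M0p 23 5 5 * M1p 23 * M1p 23 * M0p 23 5 5 * M1p 23 * M0p 23 5 5 * M1p 23 * M1p 23 * M0p 23 5 5 * M0p 23 5 5 * M0p 23 5 5 * M1p 23 * M0p 23 5 5 * M1p 23 * M1p 23 * M1p 23 * M0p 23 5 5, mul_mem (mul_mem (mul_mem (mul_mem (mul_mem (mul_mem (mul_mem (mul_mem (mul_mem (mul_mem (mul_mem (mul_mem (mul_mem (mul_mem (mul_mem (mul_mem (mul_mem (memM1) (memM0)) (memM1)) (memM1)) (memM0)) (memM1)) (memM0)) (memM1)) (memM1)) (memM0)) (memM0)) (memM0)) (memM1)) (memM0)) (memM1)) (memM1)) (memM1)) (memM0), by decide⟩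

lemma u0_mem_23 : (![5,-4,0,-5] : Fin 4 → ZMod 23) ∈ Cset 23 :=
  ⟨M1p 23 * M0p 23 5 5 * M0p 23 5 5 * M0p 23 5 5 * M0p 23 5 5 * M0p 23 5 5 * M1p 23 * M0p 23 5 5 * M1p 23 * M1p 23 * M1p 23 * M0p 23 5 5 * M1p 23 * M1p 23 * M1p 23 * M0p 23 5 5 * M1p 23 * M0p 23 5 5 * M0p 23 5 5, mul_mem (mul_mem (mul_mem (mul_mem (mul_mem (mul_mem (mul_mem (mul_mem (mul_mem (mul_mem (mul_mem (mul_mem (mul_mem (mul_mem (mul_mem (mul_mem (mul_mem (mul_mem (memM1) (memM0)) (memM0)) (memM0)) (memM0)) (memM0)) (memM1)) (memM0)) (memM1)) (memM1)) (memM1)) (memM0)) (memM1)) (memM1)) (memM1)) (memM0)) (memM1)) (memM0)) (memM0), by decide⟩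

end Orbit55

theorem orbitp_delta2_55_complete (p : ℕ) (hp : p.Prime)
    (hmem : p ∈ ({3, 7, 11, 13, 17, 19, 23} : Finset ℕ)) :
    {w : Fin 4 → ZMod p |
      ∃ g ∈ Subgroup.closure {M0p p 5 5, M1p p},
        w = Matrix.vecMul ![0,1,0,0] (g : Matrix (Fin 4) (Fin 4) (ZMod p))} =
    {w : Fin 4 → ZMod p | w ≠ 0} := by
  haveI : Fact p.Prime := ⟨hp⟩
  ext w
  simp only [Set.mem_setOf_eq]
  constructor
  · rintro ⟨g, hg, rfl⟩
    intro hzero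
    have h1 := congrArg (fun z => Matrix.vecMul z ((g⁻¹ : GL (Fin 4) (ZMod p)) : Matrix (Fin 4) (Fin 4) (ZMod p))) hzero
    simp only [Matrix.vecMul_vecMul, Matrix.zero_vecMul] at h1
    rw [← Units.val_mul, mul_inv_cancel, Units.val_one, Matrix.vecMul_one] at h1
    have h2 := congrFun h1 1
    simp at h2
  · intro hw
    fin_cases hmem
    · exact @Orbit55.main_core 3 ⟨by norm_num⟩ (by decide) (by decide) (by decide) Orbit55.d4_mem_3 Orbit55.u0_mem_3 w hw
    · exact @Orbit55.main_core 7 ⟨by norm_num⟩ (by decide) (by decide) (by decide) Orbit55.d4_mem_7 Orbit55.u0_mem_7 w hw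
    · exact @Orbit55.main_core 11 ⟨by norm_num⟩ (by decide) (by decide) (by decide) Orbit55.d4_mem_11 Orbit55.u0_mem_11 w hw
    · exact @Orbit55.main_core 13 ⟨by norm_num⟩ (by decide) (by decide) (by decide) Orbit55.d4_mem_13 Orbit55.u0_mem_13 w hw
    · exact @Orbit55.main_core 17 ⟨by norm_num⟩ (by decide) (by decide) (by decide) Orbit55.d4_mem_17 Orbit55.u0_mem_17 w hw
    · exact @Orbit55.main_core 19 ⟨by norm_num⟩ (by decide) (by decide) (by decide) Orbit55.d4_mem_19 Orbit55.u0_mem_19 w hw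
    · exact @Orbit55.main_core 23 ⟨by norm_num⟩ (by decide) (by decide) (by decide) Orbit55.d4_mem_23 Orbit55.u0_mem_23 w hw
end

section
/- Let d = 1 and k = 4. The orbit of the row vector δ₂ = (0,1,0,0) ∈ (ℤ/2ℤ)⁴ under right multiplication by the subgroup H₂(1,4) of GL(4, ℤ/2ℤ) generated by the reductions modulo 2 of M₀(1,4) and M₁ is exactly the set {(0,0,1,0), (0,1,0,0), (0,1,0,1), (0,1,1,0), (0,1,1,1), (1,0,0,1), (1,0,1,0), (1,1,1,0), (1,1,1,1)}. -/
section OrbitAux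

def a2 : Matrix (Fin 4) (Fin 4) (ZMod 2) := !![1,1,0,0; 0,1,0,0; 1,1,1,0; 0,0,1,1]
def b2 : Matrix (Fin 4) (Fin 4) (ZMod 2) := !![1,0,0,0; 0,1,0,1; 0,0,1,0; 0,0,0,1]

lemma coeA : ((M0p 2 1 4 : GL (Fin 4) (ZMod 2)) : Matrix (Fin 4) (Fin 4) (ZMod 2)) = a2 := by
  show (M0 1 4).map (Int.castRingHom (ZMod 2)) = a2
  decide

lemma coeB : ((M1p 2 : GL (Fin 4) (ZMod 2)) : Matrix (Fin 4) (Fin 4) (ZMod 2)) = b2 := by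
  show M1.map (Int.castRingHom (ZMod 2)) = b2
  decide

def S : Set (Fin 4 → ZMod 2) :=
  {![0,0,1,0], ![0,1,0,0], ![0,1,0,1], ![0,1,1,0], ![0,1,1,1], ![1,0,0,1], ![1,0,1,0], ![1,1,1,0], ![1,1,1,1]}

lemma mem_S_iff (v : Fin 4 → ZMod 2) :
    v ∈ S ↔ (v = ![0,0,1,0] ∨ v = ![0,1,0,0] ∨ v = ![0,1,0,1] ∨ v = ![0,1,1,0] ∨
      v = ![0,1,1,1] ∨ v = ![1,0,0,1] ∨ v = ![1,0,1,0] ∨ v = ![1,1,1,0] ∨ v = ![1,1,1,1]) := by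
  simp [S, Set.mem_insert_iff, Set.mem_singleton_iff]

lemma stabA : ∀ v ∈ S, Matrix.vecMul v a2 ∈ S := by
  intro v hv
  rw [mem_S_iff] at hv ⊢
  obtain rfl|rfl|rfl|rfl|rfl|rfl|rfl|rfl|rfl := hv <;> decide

lemma stabB : ∀ v ∈ S, Matrix.vecMul v b2 ∈ S := by
  intro v hv
  rw [mem_S_iff] at hv ⊢
  obtain rfl|rfl|rfl|rfl|rfl|rfl|rfl|rfl|rfl := hv <;> decide

lemma coe_mul' (x y : GL (Fin 4) (ZMod 2)) :
    ((x * y : GL (Fin 4) (ZMod 2)) : Matrix (Fin 4) (Fin 4) (ZMod 2)) =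
      (x : Matrix (Fin 4) (Fin 4) (ZMod 2)) * (y : Matrix (Fin 4) (Fin 4) (ZMod 2)) := rfl

lemma coe_one' : ((1 : GL (Fin 4) (ZMod 2)) : Matrix (Fin 4) (Fin 4) (ZMod 2)) = 1 := rfl

lemma cancel_right (g : GL (Fin 4) (ZMod 2)) (v : Fin 4 → ZMod 2) :
    Matrix.vecMul (Matrix.vecMul v (g : Matrix (Fin 4) (Fin 4) (ZMod 2)))
      ((g⁻¹ : GL (Fin 4) (ZMod 2)) : Matrix (Fin 4) (Fin 4) (ZMod 2)) = v := by
  rw [Matrix.vecMul_vecMul, ← coe_mul', mul_inv_cancel, coe_one', Matrix.vecMul_one]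

lemma stab_inv (g : GL (Fin 4) (ZMod 2))
    (h : ∀ v ∈ S, Matrix.vecMul v (g : Matrix (Fin 4) (Fin 4) (ZMod 2)) ∈ S) :
    ∀ v ∈ S, Matrix.vecMul v ((g⁻¹ : GL (Fin 4) (ZMod 2)) : Matrix (Fin 4) (Fin 4) (ZMod 2)) ∈ S := by
  have hfin : S.Finite := Set.toFinite S
  have hmaps : Set.MapsTo (fun v => Matrix.vecMul v (g : Matrix (Fin 4) (Fin 4) (ZMod 2))) S S := h
  have hinj : Set.InjOn (fun v => Matrix.vecMul v (g : Matrix (Fin 4) (Fin 4) (ZMod 2))) S := by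
    intro u _ w _ huw
    have h2 := congrArg
      (fun x => Matrix.vecMul x ((g⁻¹ : GL (Fin 4) (ZMod 2)) : Matrix (Fin 4) (Fin 4) (ZMod 2))) huw
    simpa only [cancel_right] using h2
  have hsurj := ((hfin.injOn_iff_bijOn_of_mapsTo hmaps).mp hinj).surjOn
  intro v hv
  obtain ⟨u, hu, huv⟩ := hsurj hv
  have : Matrix.vecMul v ((g⁻¹ : GL (Fin 4) (ZMod 2)) : Matrix (Fin 4) (Fin 4) (ZMod 2)) = u := by
    rw [← huv]; exact cancel_right g u
  rwa [this]

end OrbitAux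

theorem orbit2_delta2_14 :
    {w : Fin 4 → ZMod 2 |
      ∃ g ∈ Subgroup.closure {M0p 2 1 4, M1p 2},
        w = Matrix.vecMul ![0,1,0,0] (g : Matrix (Fin 4) (Fin 4) (ZMod 2))} =
    {![0,0,1,0], ![0,1,0,0], ![0,1,0,1], ![0,1,1,0], ![0,1,1,1], ![1,0,0,1], ![1,0,1,0], ![1,1,1,0], ![1,1,1,1]} := by
  have hAc : M0p 2 1 4 ∈ Subgroup.closure {M0p 2 1 4, M1p 2} :=
    Subgroup.subset_closure (Set.mem_insert _ _)
  have hBc : M1p 2 ∈ Subgroup.closure {M0p 2 1 4, M1p 2} :=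
    Subgroup.subset_closure (Set.mem_insert_of_mem _ rfl)
  ext w
  constructor
  · rintro ⟨g, hg, rfl⟩
    have key : ∀ v ∈ S, Matrix.vecMul v (g : Matrix (Fin 4) (Fin 4) (ZMod 2)) ∈ S := by
      induction hg using Subgroup.closure_induction with
      | mem x hx =>
        rcases hx with rfl | rfl
        · rw [coeA]; exact stabA
        · rw [coeB]; exact stabB
      | one => intro v hv; rwa [coe_one', Matrix.vecMul_one]
      | mul x y hx hy ihx ihy =>
        intro v hv
        rw [coe_mul', ← Matrix.vecMul_vecMul]
        exact ihy _ (ihx _ hv)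
      | inv x hx ih => exact stab_inv x ih
    have h0 : (![0,1,0,0] : Fin 4 → ZMod 2) ∈ S := by rw [mem_S_iff]; decide
    exact key _ h0
  · intro hw
    rw [Set.mem_setOf_eq]
    have hS : w ∈ S := hw
    rw [mem_S_iff] at hS
    set A := M0p 2 1 4 with hA
    set B := M1p 2 with hB
    obtain rfl|rfl|rfl|rfl|rfl|rfl|rfl|rfl|rfl := hS
    · exact ⟨B*A*B*A*A, mul_mem (mul_mem (mul_mem (mul_mem hBc hAc) hBc) hAc) hAc,
        by simp only [coe_mul', coeA, coeB, ← hA, ← hB]; decide⟩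
    · exact ⟨1, Subgroup.one_mem _, by rw [coe_one', Matrix.vecMul_one]⟩
    · exact ⟨B, hBc, by rw [hB, coeB]; decide⟩
    · exact ⟨B*A*B, mul_mem (mul_mem hBc hAc) hBc,
        by simp only [coe_mul', coeA, coeB, ← hA, ← hB]; decide⟩
    · exact ⟨B*A, mul_mem hBc hAc,
        by simp only [coe_mul', coeA, coeB, ← hA, ← hB]; decide⟩
    · exact ⟨B*A*A, mul_mem (mul_mem hBc hAc) hAc,
        by simp only [coe_mul', coeA, coeB, ← hA, ← hB]; decide⟩
    · exact ⟨B*A*B*A, mul_mem (mul_mem (mul_mem hBc hAc) hBc) hAc,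
        by simp only [coe_mul', coeA, coeB, ← hA, ← hB]; decide⟩
    · exact ⟨B*A*A*A*B, mul_mem (mul_mem (mul_mem (mul_mem hBc hAc) hAc) hAc) hBc,
        by simp only [coe_mul', coeA, coeB, ← hA, ← hB]; decide⟩
    · exact ⟨B*A*A*A, mul_mem (mul_mem (mul_mem hBc hAc) hAc) hAc,
        by simp only [coe_mul', coeA, coeB, ← hA, ← hB]; decide⟩
end

section
/- Let d = 12 and k = 7. The orbit of the row vector δ₄ = (0,0,0,1) ∈ (ℤ/3ℤ)⁴ under right multiplication by the subgroup H₃(12,7) of GL(4, ℤ/3ℤ) generated by the reductions modulo 3 of M₀(12,7) and M₁ is exactly the set {(0,0,0,1), (0,0,0,2), (0,1,1,0), (0,1,1,1), (0,1,1,2), (0,2,2,0), (0,2,2,1), (0,2,2,2)}. -/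
lemma coe_M0p_3 : (M0p 3 12 7 : Matrix (Fin 4) (Fin 4) (ZMod 3)) =
    !![1,1,0,0; 0,1,0,0; 0,0,1,0; 0,2,2,1] := by
  show (M0 12 7).map (Int.castRingHom (ZMod 3)) = _
  decide

lemma coe_M1p_3 : (M1p 3 : Matrix (Fin 4) (Fin 4) (ZMod 3)) =
    !![1,0,0,0; 0,1,0,1; 0,0,1,0; 0,0,0,1] := by
  show M1.map (Int.castRingHom (ZMod 3)) = _
  decide

theorem orbit3_delta4_127 :
    {w : Fin 4 → ZMod 3 |
      ∃ g ∈ Subgroup.closure {M0p 3 12 7, M1p 3},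
        w = Matrix.vecMul ![0,0,0,1] (g : Matrix (Fin 4) (Fin 4) (ZMod 3))} =
    {![0,0,0,1], ![0,0,0,2], ![0,1,1,0], ![0,1,1,1], ![0,1,1,2], ![0,2,2,0], ![0,2,2,1], ![0,2,2,2]} := by
  set S : Set (Fin 4 → ZMod 3) :=
    {![0,0,0,1], ![0,0,0,2], ![0,1,1,0], ![0,1,1,1], ![0,1,1,2], ![0,2,2,0], ![0,2,2,1], ![0,2,2,2]}
    with hS
  have hSfin : S.Finite := by
    simp only [hS]
    exact Set.Finite.insert _ (Set.Finite.insert _ (Set.Finite.insert _ (Set.Finite.insert _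
      (Set.Finite.insert _ (Set.Finite.insert _ (Set.Finite.insert _ (Set.finite_singleton _)))))))
  -- Stability of S under every element of the closure
  have key : ∀ g ∈ Subgroup.closure {M0p 3 12 7, M1p 3},
      ∀ v ∈ S, Matrix.vecMul v (g : Matrix (Fin 4) (Fin 4) (ZMod 3)) ∈ S := by
    intro g hg
    induction hg using Subgroup.closure_induction with
    | mem x hx =>
      rcases hx with h | h
      · subst h; rw [coe_M0p_3]
        intro v hv
        simp only [hS, Set.mem_insert_iff, Set.mem_singleton_iff] at hv ⊢
        rcases hv with h|h|h|h|h|h|h|h <;> subst h <;> decide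
      · subst h; rw [coe_M1p_3]
        intro v hv
        simp only [hS, Set.mem_insert_iff, Set.mem_singleton_iff] at hv ⊢
        rcases hv with h|h|h|h|h|h|h|h <;> subst h <;> decide
    | one => intro v hv; simpa using hv
    | mul x y hx hy ihx ihy =>
      intro v hv
      rw [Units.val_mul, ← Matrix.vecMul_vecMul]
      exact ihy _ (ihx v hv)
    | inv x hx ihx =>
      intro v hv
      have hmaps : Set.MapsTo (fun w => Matrix.vecMul w (x : Matrix (Fin 4) (Fin 4) (ZMod 3))) S S :=
        fun w hw => ihx w hw
      have hxx : (x : Matrix (Fin 4) (Fin 4) (ZMod 3)) *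
          ((x⁻¹ : GL (Fin 4) (ZMod 3)) : Matrix (Fin 4) (Fin 4) (ZMod 3)) = 1 := by
        rw [← Units.val_mul, mul_inv_cancel, Units.val_one]
      have hinj : Set.InjOn (fun w => Matrix.vecMul w (x : Matrix (Fin 4) (Fin 4) (ZMod 3))) S := by
        intro a _ b _ hab
        have h2 := congrArg (fun w => Matrix.vecMul w ((x⁻¹ : GL (Fin 4) (ZMod 3)) :
          Matrix (Fin 4) (Fin 4) (ZMod 3))) hab
        simpa only [Matrix.vecMul_vecMul, hxx, Matrix.vecMul_one] using h2
      have hbij := (hSfin.injOn_iff_bijOn_of_mapsTo hmaps).mp hinj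
      obtain ⟨w, hw, hwx⟩ := hbij.surjOn hv
      have heq : Matrix.vecMul v ((x⁻¹ : GL (Fin 4) (ZMod 3)) : Matrix (Fin 4) (Fin 4) (ZMod 3)) = w := by
        rw [← hwx]
        simp only [Matrix.vecMul_vecMul, hxx, Matrix.vecMul_one]
      rw [heq]; exact hw
  ext w
  constructor
  · rintro ⟨g, hg, rfl⟩
    exact key g hg ![0,0,0,1] (by simp [hS])
  · intro hw
    have hm0 : M0p 3 12 7 ∈ Subgroup.closure {M0p 3 12 7, M1p 3} :=
      Subgroup.subset_closure (by simp)
    have hm1 : M1p 3 ∈ Subgroup.closure {M0p 3 12 7, M1p 3} :=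
      Subgroup.subset_closure (by simp)
    simp only [hS, Set.mem_insert_iff, Set.mem_singleton_iff] at hw
    rcases hw with h|h|h|h|h|h|h|h <;> subst h
    · exact ⟨1, one_mem _, by simp⟩
    · exact ⟨M0p 3 12 7 * M1p 3 * M1p 3 * M0p 3 12 7,
        mul_mem (mul_mem (mul_mem hm0 hm1) hm1) hm0,
        by simp only [Units.val_mul, ← Matrix.vecMul_vecMul, coe_M0p_3, coe_M1p_3]; decide⟩
    · exact ⟨M0p 3 12 7 * M0p 3 12 7 * M1p 3 * M1p 3,
        mul_mem (mul_mem (mul_mem hm0 hm0) hm1) hm1,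
        by simp only [Units.val_mul, ← Matrix.vecMul_vecMul, coe_M0p_3, coe_M1p_3]; decide⟩
    · exact ⟨M0p 3 12 7 * M0p 3 12 7, mul_mem hm0 hm0,
        by simp only [Units.val_mul, ← Matrix.vecMul_vecMul, coe_M0p_3]; decide⟩
    · exact ⟨M0p 3 12 7 * M0p 3 12 7 * M1p 3, mul_mem (mul_mem hm0 hm0) hm1,
        by simp only [Units.val_mul, ← Matrix.vecMul_vecMul, coe_M0p_3, coe_M1p_3]; decide⟩
    · exact ⟨M0p 3 12 7 * M1p 3, mul_mem hm0 hm1,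
        by simp only [Units.val_mul, ← Matrix.vecMul_vecMul, coe_M0p_3, coe_M1p_3]; decide⟩
    · exact ⟨M0p 3 12 7, hm0, by rw [coe_M0p_3]; decide⟩
    · exact ⟨M0p 3 12 7 * M1p 3 * M1p 3, mul_mem (mul_mem hm0 hm1) hm1,
        by simp only [Units.val_mul, ← Matrix.vecMul_vecMul, coe_M0p_3, coe_M1p_3]; decide⟩
end

section
/- Let d = 9 and k = 6. The orbit of the row vector δ₂ = (0,1,0,0) ∈ (ℤ/3ℤ)⁴ under right multiplication by the subgroup H₃(9,6) of GL(4, ℤ/3ℤ) generated by the reductions modulo 3 of M₀(9,6) and M₁ is exactly the set {(0,1,a,b) : a, b ∈ ℤ/3ℤ} of 9 vectors. -/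
-- auxiliary lemmas
def v (a b : ZMod 3) : Fin 4 → ZMod 3 := ![0, 1, a, b]

lemma A0 (a b : ZMod 3) :
    Matrix.vecMul (v a b) ((M0p 3 9 6 : GL (Fin 4) (ZMod 3)) : Matrix (Fin 4) (Fin 4) (ZMod 3))
      = v (a - b) b := by
  show Matrix.vecMul (v a b) ((M0 9 6).map (Int.castRingHom (ZMod 3))) = v (a - b) b
  funext i
  fin_cases i <;>
    simp [v, M0, Matrix.vecMul, dotProduct, Fin.sum_univ_succ,
      show (9:ZMod 3)=0 from by decide, show (6:ZMod 3)=0 from by decide] <;> ring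

lemma A1 (a b : ZMod 3) :
    Matrix.vecMul (v a b) ((M1p 3 : GL (Fin 4) (ZMod 3)) : Matrix (Fin 4) (Fin 4) (ZMod 3))
      = v a (b + 1) := by
  show Matrix.vecMul (v a b) (M1.map (Int.castRingHom (ZMod 3))) = v a (b + 1)
  funext i
  fin_cases i <;>
    simp [v, M1, Matrix.vecMul, dotProduct, Fin.sum_univ_succ] <;> ring

abbrev Hgrp : Subgroup (GL (Fin 4) (ZMod 3)) := Subgroup.closure {M0p 3 9 6, M1p 3}

lemma v_inj {a b a' b' : ZMod 3} (h : v a b = v a' b') : a = a' ∧ b = b' := by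
  constructor
  · have := congrFun h 2; simpa [v] using this
  · have := congrFun h 3; simpa [v] using this

lemma cancel (x : GL (Fin 4) (ZMod 3)) (w : Fin 4 → ZMod 3) :
    Matrix.vecMul (Matrix.vecMul w (x : Matrix (Fin 4) (Fin 4) (ZMod 3)))
      ((x⁻¹ : GL (Fin 4) (ZMod 3)) : Matrix (Fin 4) (Fin 4) (ZMod 3)) = w := by
  rw [Matrix.vecMul_vecMul, ← Units.val_mul, mul_inv_cancel, Units.val_one, Matrix.vecMul_one]

lemma forward {g : GL (Fin 4) (ZMod 3)} (hg : g ∈ Hgrp) :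
    ∀ a b : ZMod 3, ∃ a' b' : ZMod 3,
      Matrix.vecMul (v a b) (g : Matrix (Fin 4) (Fin 4) (ZMod 3)) = v a' b' := by
  induction hg using Subgroup.closure_induction with
  | mem x hx =>
    rcases hx with h | h <;> subst h
    · exact fun a b => ⟨a - b, b, A0 a b⟩
    · exact fun a b => ⟨a, b + 1, A1 a b⟩
  | one => exact fun a b => ⟨a, b, by simp⟩
  | mul x y hx hy ihx ihy =>
    intro a b
    obtain ⟨a', b', h1⟩ := ihx a b
    obtain ⟨a'', b'', h2⟩ := ihy a' b'
    exact ⟨a'', b'', by rw [Units.val_mul, ← Matrix.vecMul_vecMul, h1, h2]⟩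
  | inv x hx ihx =>
    -- φ on ZMod 3 × ZMod 3 is injective hence surjective
    choose fa fb hf using fun p : ZMod 3 × ZMod 3 => ihx p.1 p.2
    set φ : ZMod 3 × ZMod 3 → ZMod 3 × ZMod 3 := fun p => (fa p, fb p) with hφ
    have hinj : Function.Injective φ := by
      intro p q hpq
      have h1 : Matrix.vecMul (v p.1 p.2) (x : Matrix (Fin 4) (Fin 4) (ZMod 3))
          = Matrix.vecMul (v q.1 q.2) (x : Matrix (Fin 4) (Fin 4) (ZMod 3)) := by
        rw [hf p, hf q]
        simp only [hφ, Prod.mk.injEq] at hpq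
        rw [hpq.1, hpq.2]
      have h2 : v p.1 p.2 = v q.1 q.2 := by
        have := congrArg (fun w => Matrix.vecMul w ((x⁻¹ : GL (Fin 4) (ZMod 3)) : Matrix (Fin 4) (Fin 4) (ZMod 3))) h1
        simpa only [cancel] using this
      obtain ⟨h3, h4⟩ := v_inj h2
      exact Prod.ext h3 h4
    have hsurj := Finite.surjective_of_injective hinj
    intro a b
    obtain ⟨p, hp⟩ := hsurj (a, b)
    refine ⟨p.1, p.2, ?_⟩
    have h1 : Matrix.vecMul (v p.1 p.2) (x : Matrix (Fin 4) (Fin 4) (ZMod 3)) = v a b := by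
      rw [hf p]
      simp only [hφ, Prod.mk.injEq] at hp
      rw [hp.1, hp.2]
    rw [← h1, cancel]

def reach (a b : ZMod 3) : Prop :=
  ∃ g ∈ Hgrp, Matrix.vecMul (v 0 0) (g : Matrix (Fin 4) (Fin 4) (ZMod 3)) = v a b

lemma reach_step0 {a b : ZMod 3} (h : reach a b) : reach (a - b) b := by
  obtain ⟨g, hg, hv⟩ := h
  exact ⟨g * M0p 3 9 6,
    mul_mem hg (Subgroup.subset_closure (Or.inl rfl)),
    by rw [Units.val_mul, ← Matrix.vecMul_vecMul, hv, A0]⟩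

lemma reach_step1 {a b : ZMod 3} (h : reach a b) : reach a (b + 1) := by
  obtain ⟨g, hg, hv⟩ := h
  exact ⟨g * M1p 3,
    mul_mem hg (Subgroup.subset_closure (Or.inr rfl)),
    by rw [Units.val_mul, ← Matrix.vecMul_vecMul, hv, A1]⟩

lemma reach_all (a b : ZMod 3) : reach a b := by
  have h00 : reach 0 0 := ⟨1, one_mem _, by simp⟩
  have h01 : reach 0 1 := reach_step1 h00
  have h21 : reach 2 1 := by have := reach_step0 h01; norm_num at this; exact this
  have h11 : reach 1 1 := by have := reach_step0 h21; norm_num at this; exact this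
  have step1' : ∀ a' b' : ZMod 3, reach a' b' → reach a' (b' + 1) := fun _ _ => reach_step1
  have key : ∀ a' : ZMod 3, reach a' 1 := by
    intro a'
    fin_cases a' <;> [exact h01; exact h11; exact h21]
  have h2 : reach a 2 := by have := reach_step1 (key a); norm_num at this; exact this
  have h0 : reach a 0 := by have := reach_step1 h2; norm_num at this; exact this
  fin_cases b <;> [exact h0; exact key a; exact h2]

theorem orbit3_delta2_96 :
    {w : Fin 4 → ZMod 3 |
      ∃ g ∈ Subgroup.closure {M0p 3 9 6, M1p 3},
        w = Matrix.vecMul ![0,1,0,0] (g : Matrix (Fin 4) (Fin 4) (ZMod 3))} =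
    {w : Fin 4 → ZMod 3 | ∃ a b : ZMod 3, w = ![0, 1, a, b]} := by
  ext w
  simp only [Set.mem_setOf_eq]
  constructor
  · rintro ⟨g, hg, rfl⟩
    obtain ⟨a', b', h⟩ := forward hg 0 0
    exact ⟨a', b', h⟩
  · rintro ⟨a, b, rfl⟩
    obtain ⟨g, hg, h⟩ := reach_all a b
    exact ⟨g, hg, h.symm⟩
end
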